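/- Let G be a finitely generated nilpotent group and M a submonoid of G such that MG' = G, where G' = [G,G]. Then M = G. -/

import Mathlib

open scoped Pointwise


open scoped Pointwise
open scoped commutatorElement

section CommHelp
variable {G : Type*} [Group G]

lemma commutatorElement_def' (a b : G) : ⁅a, b⁆ = a * b * a⁻¹ * b⁻¹ := rfl

lemma comm_mul_left (x y b : G) : ⁅x*y, b⁆ = x * ⁅y,b⁆ * x⁻¹ * ⁅x,b⁆ := by
  simp only [commutatorElement_def']; group

lemma comm_mul_right (a x y : G) : ⁅a, x*y⁆ = ⁅a,x⁆ * (x * ⁅a,y⁆ * x⁻¹) := by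
  simp only [commutatorElement_def']; group

lemma comm_inv_left (a b : G) : ⁅a⁻¹, b⁆ = a⁻¹ * ⁅a,b⁆⁻¹ * a := by
  simp only [commutatorElement_def']; group

lemma comm_inv_right (a b : G) : ⁅a, b⁻¹⁆ = b⁻¹ * ⁅a,b⁆⁻¹ * b := by
  simp only [commutatorElement_def']; group

lemma comm_central_left {w : G} (hw : ∀ x : G, w * x = x * w) (m n : G) :
    ⁅m*w, n⁆ = ⁅m, n⁆ := by
  simp only [commutatorElement_def', mul_inv_rev]
  have h1 : m * w * n = m * n * w := by rw [mul_assoc, hw n, mul_assoc]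
  rw [h1]
  have h2 : m * n * w * (w⁻¹ * m⁻¹) = m * n * m⁻¹ := by group
  rw [show m * n * w * (w⁻¹ * m⁻¹) * n⁻¹ = (m * n * w * (w⁻¹ * m⁻¹)) * n⁻¹ by group, h2]

lemma comm_central_right {w : G} (hw : ∀ x : G, w * x = x * w) (m n : G) :
    ⁅m, n*w⁆ = ⁅m, n⁆ := by
  rw [← commutatorElement_inv (n*w) m, comm_central_left hw n m, commutatorElement_inv]

lemma comm_pow_left {a b : G} (hc : ∀ x : G, ⁅a,b⁆ * x = x * ⁅a,b⁆) (k : ℕ) :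
    ⁅a^k, b⁆ = ⁅a,b⁆^k := by
  induction k with
  | zero => simp [commutatorElement_def']
  | succ k ih =>
      rw [pow_succ' a k, comm_mul_left, ih]
      have hcm : Commute ⁅a,b⁆ a := hc a
      have hcom : Commute a (⁅a,b⁆^k) := hcm.symm.pow_right k
      have : a * ⁅a,b⁆^k * a⁻¹ = ⁅a,b⁆^k := by rw [hcom.eq]; group
      rw [this, pow_succ]

lemma comm_pow_right {a b : G} (hc : ∀ x : G, ⁅a,b⁆ * x = x * ⁅a,b⁆) (k : ℕ) :
    ⁅a, b^k⁆ = ⁅a,b⁆^k := by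
  induction k with
  | zero => simp [commutatorElement_def']
  | succ k ih =>
      rw [pow_succ' b k, comm_mul_right, ih]
      have hcm : Commute ⁅a,b⁆ b := hc b
      have hcom : Commute b (⁅a,b⁆^k) := hcm.symm.pow_right k
      have : b * ⁅a,b⁆^k * b⁻¹ = ⁅a,b⁆^k := by rw [hcom.eq]; group
      rw [this, pow_succ']

lemma comm_pow_pow {a b : G} (hc : ∀ x : G, ⁅a,b⁆ * x = x * ⁅a,b⁆) (k : ℕ) :
    ⁅a^k, b^k⁆ = ⁅a,b⁆^(k*k) := by
  have h1 : ⁅a^k, b⁆ = ⁅a,b⁆^k := comm_pow_left hc k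
  have hc2 : ∀ x : G, ⁅a^k, b⁆ * x = x * ⁅a^k, b⁆ := by
    intro x; rw [h1]
    exact (Commute.pow_left (show Commute ⁅a,b⁆ x from hc x) k).eq
  calc ⁅a^k, b^k⁆ = ⁅a^k, b⁆^k := comm_pow_right hc2 k
    _ = (⁅a,b⁆^k)^k := by rw [h1]
    _ = ⁅a,b⁆^(k*k) := by rw [← pow_mul]

lemma comm_inv_inv_central {a b : G} (hc : ∀ x : G, ⁅a,b⁆ * x = x * ⁅a,b⁆) :
    ⁅a⁻¹, b⁻¹⁆ = ⁅a,b⁆ := by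
  have h0 : ⁅a⁻¹, b⁻¹⁆ = a⁻¹ * b⁻¹ * (a * b) := by
    simp [commutatorElement_def']; group
  have h1 : a * b = ⁅a,b⁆ * (b * a) := by
    rw [commutatorElement_def']; group
  rw [h0, h1, hc (b*a)]
  group

end CommHelp
section CentralHelp
variable {G : Type*} [Group G]

lemma central_inv {t : G} (ht : ∀ x : G, t * x = x * t) :
    ∀ x : G, t⁻¹ * x = x * t⁻¹ := by
  intro x
  calc t⁻¹ * x = t⁻¹ * x * t * t⁻¹ := by group
    _ = t⁻¹ * (t * x) * t⁻¹ := by rw [mul_assoc t⁻¹ x t, ← ht x]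
    _ = x * t⁻¹ := by group

lemma conj_central {t : G} (ht : ∀ x : G, t * x = x * t) (g : G) :
    g * t * g⁻¹ = t := by rw [← ht g]; group

lemma conj_central' {t : G} (ht : ∀ x : G, t * x = x * t) (g : G) :
    g⁻¹ * t * g = t := by rw [← ht g⁻¹]; group

lemma central_pow {t : G} (ht : ∀ x : G, t * x = x * t) (k : ℕ) :
    ∀ x : G, t^k * x = x * t^k := fun x =>
  ((Commute.pow_left (show Commute t x from ht x) k)).eq

end CentralHelp

universe u

lemma lcs_succ_eq {G : Type u} [Group G] (n : ℕ) :
    (⊤ : Subgroup G).lowerCentralSeries (n+1) = ⁅(⊤ : Subgroup G).lowerCentralSeries n, (⊤ : Subgroup G)⁆ := rfl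

lemma lcs_map_surj {G H : Type u} [Group G] [Group H] (f : G →* H)
    (hf : Function.Surjective f) (n : ℕ) :
    ((⊤ : Subgroup G).lowerCentralSeries n).map f = (⊤ : Subgroup H).lowerCentralSeries n := by
  induction n with
  | zero => simpa using Subgroup.map_top_of_surjective f hf
  | succ n ih =>
      rw [lcs_succ_eq, lcs_succ_eq, Subgroup.map_commutator, ih,
        Subgroup.map_top_of_surjective f hf]

/-- centrality of the before-last term -/
lemma lcs_central {G : Type u} [Group G] {n : ℕ}
    (hbot : (⊤ : Subgroup G).lowerCentralSeries (n+1) = ⊥) :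
    ∀ z ∈ (⊤ : Subgroup G).lowerCentralSeries n, ∀ x : G, z * x = x * z := by
  intro z hz x
  have : ⁅z, x⁆ ∈ (⊤ : Subgroup G).lowerCentralSeries (n+1) :=
    Subgroup.commutator_mem_commutator hz (Subgroup.mem_top x)
  rw [hbot, Subgroup.mem_bot, commutatorElement_eq_one_iff_mul_comm] at this
  exact this

/-- the key bilinearity step: description of `lcs (n+1)` by commutators of generators,
in a group where `lcs (n+2)` is trivial. -/
lemma step_core {Q : Type u} [Group Q] (n : ℕ)
    (hQ : (⊤ : Subgroup Q).lowerCentralSeries (n+2) = ⊥)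
    (F S : Set Q) (hFsub : F ⊆ (⊤ : Subgroup Q).lowerCentralSeries n)
    (hS : Subgroup.closure S = ⊤)
    (hgen : (⊤ : Subgroup Q).lowerCentralSeries n = Subgroup.closure F ⊔ (⊤ : Subgroup Q).lowerCentralSeries (n+1)) :
    (⊤ : Subgroup Q).lowerCentralSeries (n+1)
      = Subgroup.closure ((fun p : Q × Q => ⁅p.1, p.2⁆) '' (F ×ˢ S)) := by
  set K := Subgroup.closure ((fun p : Q × Q => ⁅p.1, p.2⁆) '' (F ×ˢ S)) with hK
  have hcen : ∀ z ∈ (⊤ : Subgroup Q).lowerCentralSeries (n+1), ∀ x : Q, z * x = x * z :=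
    lcs_central hQ
  have hcomm_mem : ∀ a ∈ (⊤ : Subgroup Q).lowerCentralSeries n, ∀ b : Q,
      ⁅a, b⁆ ∈ (⊤ : Subgroup Q).lowerCentralSeries (n+1) := by
    intro a ha b
    rw [lcs_succ_eq]
    exact Subgroup.commutator_mem_commutator ha (Subgroup.mem_top b)
  -- step 1 : for s ∈ S, a ∈ lcs n, ⁅a,s⁆ ∈ K
  have step1 : ∀ s ∈ S, ∀ a ∈ (⊤ : Subgroup Q).lowerCentralSeries n, ⁅a, s⁆ ∈ K := by
    intro s hs
    set Hs : Subgroup Q :=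
      { carrier := {a | a ∈ (⊤ : Subgroup Q).lowerCentralSeries n ∧ ⁅a, s⁆ ∈ K}
        one_mem' := by
          refine ⟨Subgroup.one_mem _, ?_⟩
          have : ⁅(1:Q), s⁆ = 1 := by simp
          rw [this]; exact Subgroup.one_mem _
        mul_mem' := by
          rintro a a' ⟨ha1, ha2⟩ ⟨ha1', ha2'⟩
          refine ⟨Subgroup.mul_mem _ ha1 ha1', ?_⟩
          have h1 : ⁅a * a', s⁆ = a * ⁅a', s⁆ * a⁻¹ * ⁅a, s⁆ := comm_mul_left a a' s
          have h2 : a * ⁅a', s⁆ * a⁻¹ = ⁅a', s⁆ :=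
            conj_central (hcen _ (hcomm_mem a' ha1' s)) a
          rw [h1, h2]
          exact Subgroup.mul_mem _ ha2' ha2
        inv_mem' := by
          rintro a ⟨ha1, ha2⟩
          refine ⟨Subgroup.inv_mem _ ha1, ?_⟩
          have h1 : ⁅a⁻¹, s⁆ = a⁻¹ * ⁅a, s⁆⁻¹ * a := comm_inv_left a s
          have h2 : a⁻¹ * ⁅a, s⁆⁻¹ * a = ⁅a, s⁆⁻¹ :=
            conj_central' (central_inv (hcen _ (hcomm_mem a ha1 s))) a
          rw [h1, h2]
          exact Subgroup.inv_mem _ ha2 }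
    intro a ha
    have : (⊤ : Subgroup Q).lowerCentralSeries n ≤ Hs := by
      rw [hgen]
      refine sup_le ?_ ?_
      · rw [Subgroup.closure_le]
        intro f hf
        refine ⟨hFsub hf, Subgroup.subset_closure ?_⟩
        exact ⟨(f, s), Set.mk_mem_prod hf hs, rfl⟩
      · intro c hc
        refine ⟨lowerCentralSeries_antitone _ (Nat.le_succ n) hc, ?_⟩
        have : ⁅c, s⁆ = 1 := commutatorElement_eq_one_iff_mul_comm.mpr (hcen c hc s)
        rw [this]; exact Subgroup.one_mem _
    exact (this ha).2
  -- step 2 : for a ∈ lcs n, all b, ⁅a,b⁆ ∈ K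
  have step2 : ∀ a ∈ (⊤ : Subgroup Q).lowerCentralSeries n, ∀ b : Q, ⁅a, b⁆ ∈ K := by
    intro a ha
    set Ba : Subgroup Q :=
      { carrier := {b | ⁅a, b⁆ ∈ K}
        one_mem' := by
          have : ⁅a, (1:Q)⁆ = 1 := by simp
          simp only [Set.mem_setOf_eq, this]; exact Subgroup.one_mem _
        mul_mem' := by
          rintro x y hx hy
          simp only [Set.mem_setOf_eq] at hx hy ⊢
          have h1 : ⁅a, x*y⁆ = ⁅a,x⁆ * (x * ⁅a,y⁆ * x⁻¹) := comm_mul_right a x y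
          have h2 : x * ⁅a,y⁆ * x⁻¹ = ⁅a,y⁆ :=
            conj_central (hcen _ (hcomm_mem a ha y)) x
          rw [h1, h2]; exact Subgroup.mul_mem _ hx hy
        inv_mem' := by
          rintro x hx
          simp only [Set.mem_setOf_eq] at hx ⊢
          have h1 : ⁅a, x⁻¹⁆ = x⁻¹ * ⁅a,x⁆⁻¹ * x := comm_inv_right a x
          have h2 : x⁻¹ * ⁅a,x⁆⁻¹ * x = ⁅a,x⁆⁻¹ :=
            conj_central' (central_inv (hcen _ (hcomm_mem a ha x))) x
          rw [h1, h2]; exact Subgroup.inv_mem _ hx }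
    intro b
    have : (⊤ : Subgroup Q) ≤ Ba := by
      rw [← hS, Subgroup.closure_le]
      intro s hs
      exact step1 s hs a ha
    exact this (Subgroup.mem_top b)
  apply le_antisymm
  · rw [lcs_succ_eq, Subgroup.commutator_le]
    intro a ha b _
    exact step2 a ha b
  · rw [Subgroup.closure_le]
    rintro x ⟨⟨f, s⟩, ⟨hf, _⟩, rfl⟩
    exact hcomm_mem f (hFsub hf) s

lemma central_normal {G : Type u} [Group G] (H : Subgroup G)
    (h : ∀ z ∈ H, ∀ x : G, z * x = x * z) : H.Normal := by
  constructor
  intro z hz g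
  have : g * z * g⁻¹ = z := conj_central (h z hz) g
  rwa [this]

lemma lcs_fg_aux (G : Type u) [Group G] [Group.FG G] (n : ℕ) :
    ∃ F : Set G, F.Finite ∧ F ⊆ (⊤ : Subgroup G).lowerCentralSeries n ∧
      (⊤ : Subgroup G).lowerCentralSeries n = Subgroup.closure F ⊔ (⊤ : Subgroup G).lowerCentralSeries (n+1) := by
  obtain ⟨Sset, hSgen, hSfin⟩ := Group.fg_iff.mp ‹Group.FG G›
  induction n with
  | zero =>
      refine ⟨Sset, hSfin, by simp, ?_⟩
      rw [lowerCentralSeries_zero, hSgen]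
      simp
  | succ n ih =>
      obtain ⟨F, hFfin, hFsub, hFgen⟩ := ih
      -- work in the quotient by lcs (n+2)
      set W := (⊤ : Subgroup G).lowerCentralSeries (n+2) with hW
      haveI : W.Normal := Subgroup.lowerCentralSeries_normal ⊤ (n+2)
      set π := QuotientGroup.mk' W with hπ
      have hπsurj : Function.Surjective π := QuotientGroup.mk'_surjective W
      set Q := G ⧸ W
      have hmap : ∀ k : ℕ, ((⊤ : Subgroup G).lowerCentralSeries k).map π = (⊤ : Subgroup Q).lowerCentralSeries k :=
        lcs_map_surj π hπsurj
      have hQbot : (⊤ : Subgroup Q).lowerCentralSeries (n+2) = ⊥ := by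
        rw [← hmap (n+2)]
        have : W ≤ π.ker := by rw [QuotientGroup.ker_mk']
        rwa [← Subgroup.map_eq_bot_iff] at this
      have hFQsub : (π '' F : Set Q) ⊆ (⊤ : Subgroup Q).lowerCentralSeries n := by
        rintro _ ⟨f, hf, rfl⟩
        rw [← hmap n]
        exact Subgroup.mem_map_of_mem π (hFsub hf)
      have hSQ : Subgroup.closure (π '' Sset : Set Q) = ⊤ := by
        rw [← MonoidHom.map_closure, hSgen]
        exact Subgroup.map_top_of_surjective π hπsurj
      have hgenQ : (⊤ : Subgroup Q).lowerCentralSeries n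
          = Subgroup.closure (π '' F) ⊔ (⊤ : Subgroup Q).lowerCentralSeries (n+1) := by
        rw [← hmap n, hFgen, Subgroup.map_sup, MonoidHom.map_closure, hmap (n+1)]
      have hcore := step_core n hQbot (π '' F) (π '' Sset) hFQsub hSQ hgenQ
      -- pull back
      set Comm : Set G := (fun p : G × G => ⁅p.1, p.2⁆) '' (F ×ˢ Sset) with hComm
      have hCommQ : (fun p : Q × Q => ⁅p.1, p.2⁆) '' ((π '' F) ×ˢ (π '' Sset))
          = π '' Comm := by
        ext x
        constructor
        · rintro ⟨⟨a, b⟩, ⟨⟨f, hf, rfl⟩, ⟨s, hs, rfl⟩⟩, rfl⟩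
          exact ⟨⁅f, s⁆, ⟨(f, s), Set.mk_mem_prod hf hs, rfl⟩,
            (map_commutatorElement π f s).symm⟩
        · rintro ⟨_, ⟨⟨f, s⟩, ⟨hf, hs⟩, rfl⟩, rfl⟩
          exact ⟨(π f, π s), Set.mk_mem_prod ⟨f, hf, rfl⟩ ⟨s, hs, rfl⟩,
            (map_commutatorElement π f s).symm⟩
      refine ⟨Comm, (hFfin.prod hSfin).image _, ?_, ?_⟩
      · rintro _ ⟨⟨f, s⟩, ⟨hf, _⟩, rfl⟩
        rw [lcs_succ_eq]
        exact Subgroup.commutator_mem_commutator (hFsub hf) (Subgroup.mem_top s)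
      · -- both subgroups contain ker π and have equal images
        have h1 : ((⊤ : Subgroup G).lowerCentralSeries (n+1)).map π
            = (Subgroup.closure Comm ⊔ (⊤ : Subgroup G).lowerCentralSeries (n+2)).map π := by
          rw [hmap (n+1), hcore, hCommQ, Subgroup.map_sup, MonoidHom.map_closure]
          have : ((⊤ : Subgroup G).lowerCentralSeries (n+2)).map π = ⊥ := by
            have : W ≤ π.ker := by rw [QuotientGroup.ker_mk']
            rwa [← Subgroup.map_eq_bot_iff] at this
          rw [this, sup_bot_eq]
        have hker : π.ker = W := QuotientGroup.ker_mk' W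
        have h2 := congrArg (Subgroup.comap π) h1
        rw [Subgroup.comap_map_eq, Subgroup.comap_map_eq, hker] at h2
        have e1 : (⊤ : Subgroup G).lowerCentralSeries (n+1) ⊔ W = (⊤ : Subgroup G).lowerCentralSeries (n+1) :=
          sup_eq_left.mpr (lowerCentralSeries_antitone _ (Nat.le_succ (n+1)))
        have e2 : Subgroup.closure Comm ⊔ W ⊔ W = Subgroup.closure Comm ⊔ W := by
          rw [sup_assoc, sup_idem]
        rw [e1, e2] at h2
        exact h2

lemma lcs_fg (G : Type u) [Group G] [Group.FG G] {n : ℕ}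
    (hbot : (⊤ : Subgroup G).lowerCentralSeries (n+1) = ⊥) :
    ∃ F : Set G, F.Finite ∧ (⊤ : Subgroup G).lowerCentralSeries n = Subgroup.closure F := by
  obtain ⟨F, hFfin, _, hFgen⟩ := lcs_fg_aux G n
  exact ⟨F, hFfin, by rw [hFgen, hbot, sup_bot_eq]⟩

section RatSol

variable {ι : Type v} [Fintype ι] [DecidableEq ι]

/-- coordinatewise cast ℚ → ℝ -/
def Rc (v : ι → ℚ) : ι → ℝ := fun i => (v i : ℝ)

lemma Rc_add (u v : ι → ℚ) : Rc (u + v) = Rc u + Rc v := by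
  funext i; simp [Rc]

lemma Rc_zero : Rc (0 : ι → ℚ) = 0 := by funext i; simp [Rc]

lemma Rc_smul (q : ℚ) (v : ι → ℚ) : Rc (q • v) = (q : ℝ) • Rc v := by
  funext i; simp [Rc]

lemma Rc_inj : Function.Injective (Rc (ι := ι)) := by
  intro u v h
  funext i
  have := congrFun h i
  simpa [Rc] using this

lemma Rc_sum {J : Type w} [Fintype J] (f : J → (ι → ℚ)) :
    Rc (∑ j, f j) = ∑ j, Rc (f j) := by
  funext i
  simp [Rc, Finset.sum_apply]

/-- transfer of a ℚ-linear functional to ℝ, agreeing on rational points -/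
noncomputable def realify (φ : (ι → ℚ) →ₗ[ℚ] ℚ) : (ι → ℝ) →ₗ[ℝ] ℝ where
  toFun y := ∑ i, (φ (Pi.single i 1) : ℝ) * y i
  map_add' y z := by simp [mul_add, Finset.sum_add_distrib]
  map_smul' c y := by simp [Finset.mul_sum]; congr 1; funext i; ring

lemma realify_apply_Rc (φ : (ι → ℚ) →ₗ[ℚ] ℚ) (u : ι → ℚ) :
    realify φ (Rc u) = (φ u : ℝ) := by
  have hu : φ u = ∑ i, u i * φ (Pi.single i 1) := by
    conv_lhs => rw [← Finset.univ_sum_single u]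
    rw [map_sum]
    congr 1; funext i
    have : Pi.single i (u i) = u i • (Pi.single i (1:ℚ) : ι → ℚ) := by
      rw [← Pi.single_smul]; simp
    rw [this, map_smul, smul_eq_mul]
  have : (realify φ) (Rc u) = ∑ i, (φ (Pi.single i 1) : ℝ) * (u i : ℝ) := rfl
  rw [this, hu]
  push_cast
  congr 1; funext i; ring

lemma rat_sol_aux {J : Type w} [Fintype J] [DecidableEq J] (w : J → (ι → ℚ)) (x : ι → ℚ) :
    ∀ (k : ℕ) (lam : J → ℝ),
      (Finset.univ.filter fun j => lam j ≠ 0).card ≤ k →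
      (∀ j, 0 ≤ lam j) →
      (∑ j, lam j • Rc (w j)) = Rc x →
      ∃ mu : J → ℚ, (∀ j, 0 ≤ mu j) ∧ ∑ j, mu j • w j = x := by
  intro k
  induction k with
  | zero =>
      intro lam hcard hpos heq
      have hempty : (Finset.univ.filter fun j => lam j ≠ 0) = ∅ :=
        Finset.card_eq_zero.mp (Nat.le_zero.mp hcard)
      have hlam0 : ∀ j, lam j = 0 := by
        intro j
        by_contra hj
        have : j ∈ Finset.univ.filter fun j => lam j ≠ 0 := by
          simp [hj]
        rw [hempty] at this; simp at this
      have hx : Rc x = 0 := by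
        rw [← heq]
        apply Finset.sum_eq_zero
        intro j _; rw [hlam0 j, zero_smul]
      refine ⟨0, by simp, ?_⟩
      have : x = 0 := Rc_inj (by rw [hx, Rc_zero])
      simp [this]
  | succ k ih =>
      intro lam hcard hpos heq
      classical
      set supp := Finset.univ.filter fun j => lam j ≠ 0 with hsupp
      by_cases hli : LinearIndependent ℝ (fun j : ↥supp => Rc (w ↑j))
      · -- independent case: coefficients are rational
        have hQli : LinearIndependent ℚ (fun j : ↥supp => w ↑j) := by
          rw [Fintype.linearIndependent_iff]
          intro g hg j
          have hgR : ∑ j : ↥supp, ((g j : ℝ)) • Rc (w ↑j) = 0 := by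
            have := congrArg Rc (hg ▸ (rfl : (∑ j : ↥supp, g j • w ↑j) = ∑ j : ↥supp, g j • w ↑j))
            calc ∑ j : ↥supp, ((g j : ℝ)) • Rc (w ↑j)
                = Rc (∑ j : ↥supp, g j • w ↑j) := by
                  rw [Rc_sum]; congr 1; funext j; rw [Rc_smul]
              _ = 0 := by rw [hg, Rc_zero]
          have := Fintype.linearIndependent_iff.mp hli (fun j => (g j : ℝ)) hgR j
          exact_mod_cast this
        -- dual functionals
        set Wsp := Submodule.span ℚ (Set.range (fun j : ↥supp => w ↑j)) with hWsp
        set b := Module.Basis.span hQli with hb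
        obtain ⟨g, hg⟩ := (Wsp.subtype).exists_leftInverse_of_injective
          (Submodule.ker_subtype Wsp)
        have hgw : ∀ j : ↥supp, g (w ↑j) = b j := by
          intro j
          have h1 : (b j : ι → ℚ) = w ↑j := congrArg Subtype.val (Module.Basis.span_apply hQli j)
          have h2 : Wsp.subtype (b j) = w ↑j := h1
          calc g (w ↑j) = g (Wsp.subtype (b j)) := by rw [h2]
            _ = b j := by
                have := congrArg (fun m => m (b j)) hg
                simpa using this
        have key : ∀ j : ↥supp, lam ↑j = (((b.coord j).comp g) x : ℝ) := by
          intro j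
          have happ := congrArg (realify ((b.coord j).comp g)) heq
          rw [map_sum] at happ
          rw [realify_apply_Rc] at happ
          have hterm : ∀ j' : J, (realify ((b.coord j).comp g)) (lam j' • Rc (w j'))
              = lam j' * (((b.coord j).comp g) (w j') : ℝ) := by
            intro j'
            rw [map_smul, realify_apply_Rc]; simp
          rw [Finset.sum_congr rfl (fun j' _ => hterm j')] at happ
          have hsplit : ∑ j' : J, lam j' * (((b.coord j).comp g) (w j') : ℝ)
              = ∑ j' ∈ supp, lam j' * (((b.coord j).comp g) (w j') : ℝ) := by
            symm
            apply Finset.sum_subset (Finset.subset_univ supp)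
            intro j' _ hj'
            have : lam j' = 0 := by
              by_contra hc
              exact hj' (by simp [hsupp, hc])
            rw [this, zero_mul]
          have hval : ∀ j' : ↥supp, (((b.coord j).comp g) (w ↑j') : ℚ)
              = if j' = j then 1 else 0 := by
            intro j'
            have h0 : ((b.coord j).comp g) (w ↑j') = (b.coord j) (b j') := by
              rw [LinearMap.comp_apply, hgw j']
            rw [h0, Module.Basis.coord_apply, Module.Basis.repr_self, Finsupp.single_apply]
          rw [hsplit] at happ
          rw [← Finset.sum_coe_sort supp
            (fun j' => lam j' * (((b.coord j).comp g) (w j') : ℝ))] at happ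
          have hfin : ∑ j' : ↥supp, lam ↑j' * (((b.coord j).comp g) (w ↑j') : ℝ)
              = lam ↑j := by
            rw [Finset.sum_congr rfl (fun j' _ => by rw [hval j'])]
            have hcast : ∀ j' : ↥supp,
                lam ↑j' * (((if j' = j then (1:ℚ) else 0) : ℚ) : ℝ)
                = if j' = j then lam ↑j' else 0 := by
              intro j'
              by_cases h : j' = j <;> simp [h]
            rw [Finset.sum_congr rfl (fun j' _ => hcast j')]
            simp
          rw [hfin] at happ
          exact happ
        -- define mu
        refine ⟨fun j => if h : j ∈ supp then ((b.coord ⟨j, h⟩).comp g) x else 0, ?_, ?_⟩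
        · intro j
          by_cases h : j ∈ supp
          · simp only [dif_pos h]
            have := key ⟨j, h⟩
            have hl := hpos j
            rw [this] at hl
            exact_mod_cast hl
          · simp [dif_neg h]
        · apply Rc_inj
          rw [Rc_sum, ← heq]
          apply Finset.sum_congr rfl
          intro j _
          rw [Rc_smul]
          congr 1
          by_cases h : j ∈ supp
          · simp only [dif_pos h]
            exact (key ⟨j, h⟩).symm
          · simp only [dif_neg h]
            have : lam j = 0 := by
              by_contra hc
              exact h (by simp [hsupp, hc])
            simp [this]
      · -- dependent case : reduce support
        obtain ⟨g0, hg0sum, j₁, hj₁⟩ := Fintype.not_linearIndependent_iff.mp hli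
        -- make the distinguished coefficient positive
        obtain ⟨g, hgsum, hgj₁⟩ :
            ∃ g : ↥supp → ℝ, (∑ j : ↥supp, g j • Rc (w ↑j)) = 0 ∧ 0 < g j₁ := by
          rcases lt_trichotomy (g0 j₁) 0 with h | h | h
          · refine ⟨-g0, ?_, by simpa using h⟩
            rw [← neg_zero, ← hg0sum, ← Finset.sum_neg_distrib]
            congr 1; funext j
            simp [neg_smul]
          · exact absurd h hj₁
          · exact ⟨g0, hg0sum, h⟩
        set g' : J → ℝ := fun j => if h : j ∈ supp then g ⟨j, h⟩ else 0 with hg'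
        have hg'sum : (∑ j : J, g' j • Rc (w j)) = 0 := by
          have h1 : ∑ j : J, g' j • Rc (w j) = ∑ j ∈ supp, g' j • Rc (w j) := by
            symm
            apply Finset.sum_subset (Finset.subset_univ supp)
            intro j _ hj
            simp [hg', dif_neg hj]
          have h2 : ∑ j ∈ supp, g' j • Rc (w j)
              = ∑ j : ↥supp, g' ↑j • Rc (w ↑j) :=
            (Finset.sum_coe_sort supp (fun j => g' j • Rc (w j))).symm
          have h3 : ∑ j : ↥supp, g' ↑j • Rc (w ↑j)
              = ∑ j : ↥supp, g j • Rc (w ↑j) := by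
            apply Finset.sum_congr rfl
            intro j _
            congr 1
            simp [hg', dif_pos j.2]
          rw [h1, h2, h3, hgsum]
        have hj₁' : g' ↑j₁ > 0 := by rw [hg']; simpa [dif_pos j₁.2] using hgj₁
        set Jpos := Finset.univ.filter fun j => 0 < g' j with hJpos
        have hJposne : Jpos.Nonempty := ⟨j₁, by simp [hJpos, hj₁']⟩
        obtain ⟨j₀, hj₀mem, hj₀min⟩ := Finset.exists_min_image Jpos (fun j => lam j / g' j) hJposne
        have hgj₀ : 0 < g' j₀ := by
          have := hj₀mem; simp [hJpos] at this; exact this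
        set t := lam j₀ / g' j₀ with ht
        have ht0 : 0 ≤ t := div_nonneg (hpos j₀) (le_of_lt hgj₀)
        set lam' : J → ℝ := fun j => lam j - t * g' j with hlam'
        have hpos' : ∀ j, 0 ≤ lam' j := by
          intro j
          rw [hlam']
          by_cases h : 0 < g' j
          · have hmem : j ∈ Jpos := by simp [hJpos, h]
            have := hj₀min j hmem
            have h2 : t * g' j ≤ lam j := by
              rw [ht]
              calc lam j₀ / g' j₀ * g' j ≤ lam j / g' j * g' j := by
                    apply mul_le_mul_of_nonneg_right this (le_of_lt h)
                _ = lam j := div_mul_cancel₀ (lam j) (ne_of_gt h)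
            simp [h2]
          · push_neg at h
            have : t * g' j ≤ 0 := mul_nonpos_of_nonneg_of_nonpos ht0 h
            have := hpos j
            simp only [sub_nonneg]
            linarith
        have heq' : (∑ j, lam' j • Rc (w j)) = Rc x := by
          rw [← heq]
          rw [show (∑ j, lam' j • Rc (w j))
            = (∑ j, lam j • Rc (w j)) - t • (∑ j, g' j • Rc (w j)) from ?_]
          · rw [hg'sum, smul_zero, sub_zero]
          · rw [Finset.smul_sum, ← Finset.sum_sub_distrib]
            congr 1; funext j
            rw [hlam', sub_smul, smul_smul]
        have hzero_j₀ : lam' j₀ = 0 := by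
          have h1 : t * g' j₀ = lam j₀ := by
            rw [ht]; field_simp
          simp [hlam', h1]
        have hsubset : (Finset.univ.filter fun j => lam' j ≠ 0) ⊆ supp.erase j₀ := by
          intro j hj
          simp only [Finset.mem_filter, Finset.mem_univ, true_and] at hj
          rw [Finset.mem_erase]
          constructor
          · intro hc; rw [hc] at hj; exact hj hzero_j₀
          · by_contra hc
            have hg'0 : g' j = 0 := by rw [hg']; simp [dif_neg hc]
            have hl0 : lam j = 0 := by
              by_contra hcc
              exact hc (by simp [hsupp, hcc])
            apply hj
            simp only [hlam']
            rw [hg'0, hl0]; ring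
        have hj₀supp : j₀ ∈ supp := by
          by_contra hc
          have : g' j₀ = 0 := by rw [hg']; simp [dif_neg hc]
          rw [this] at hgj₀; exact lt_irrefl 0 hgj₀
        have hcard' : (Finset.univ.filter fun j => lam' j ≠ 0).card ≤ k := by
          calc (Finset.univ.filter fun j => lam' j ≠ 0).card
              ≤ (supp.erase j₀).card := Finset.card_le_card hsubset
            _ = supp.card - 1 := Finset.card_erase_of_mem hj₀supp
            _ ≤ (k+1) - 1 := by
                have : supp.card ≤ k + 1 := hcard
                omega
            _ = k := rfl
        exact ih lam' hcard' hpos' heq'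

lemma rat_sol {J : Type w} [Fintype J] [DecidableEq J] (w : J → (ι → ℚ)) (x : ι → ℚ)
    (lam : J → ℝ) (hpos : ∀ j, 0 ≤ lam j) (heq : (∑ j, lam j • Rc (w j)) = Rc x) :
    ∃ mu : J → ℚ, (∀ j, 0 ≤ mu j) ∧ ∑ j, mu j • w j = x :=
  rat_sol_aux w x _ lam le_rfl hpos heq

end RatSol

section ConeMain
open scoped NNReal

theorem cone_main {A : Type v} [AddCommGroup A] (hfg : AddGroup.FG A)
    (N : AddSubmonoid A)
    (hsep : ∀ χ : A →+ ℝ, (∀ n ∈ N, 0 ≤ χ n) → χ = 0)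
    (z : A) : ∃ q : ℕ, 0 < q ∧ q • z ∈ N := by
  classical
  set T := AddCommGroup.torsion A with hT
  set Qt := A ⧸ T with hQt
  set mk : A →+ Qt := QuotientAddGroup.mk' T with hmk
  have hmksurj : Function.Surjective mk := QuotientAddGroup.mk'_surjective T
  have htor : ∀ a : A, mk a = 0 → ∃ e : ℕ, 0 < e ∧ e • a = 0 := by
    intro a ha
    have h1 : a ∈ T := (QuotientAddGroup.eq_zero_iff a).mp ha
    have h2 : IsOfFinAddOrder a := (AddCommGroup.mem_torsion a).mp h1
    exact isOfFinAddOrder_iff_nsmul_eq_zero.mp h2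
  haveI hTF : IsAddTorsionFree Qt := inferInstanceAs (IsAddTorsionFree (A ⧸ AddCommGroup.torsion A))
  haveI : Module.IsTorsionFree ℤ Qt := inferInstance
  haveI : AddGroup.FG A := hfg
  haveI : AddGroup.FG Qt := AddGroup.fg_of_surjective hmksurj
  haveI : Module.Finite ℤ Qt := Module.Finite.iff_addGroup_fg.mpr ‹_›
  haveI : Module.Free ℤ Qt := Module.free_of_finite_type_torsion_free'
  set ι := Module.Free.ChooseBasisIndex ℤ Qt with hι
  set b := Module.Free.chooseBasis ℤ Qt with hb
  -- the rational coordinates homomorphism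
  set ψ : A →+ (ι → ℚ) :=
    { toFun := fun a i => ((b.repr (mk a)) i : ℚ)
      map_zero' := by funext i; simp
      map_add' := by
        intro a a'
        funext i
        show ((b.repr (mk (a+a'))) i : ℚ)
          = ((b.repr (mk a)) i : ℚ) + ((b.repr (mk a')) i : ℚ)
        rw [map_add, map_add, Finsupp.add_apply]
        push_cast
        ring } with hψ
  have hψtor : ∀ a : A, ψ a = 0 → ∃ e : ℕ, 0 < e ∧ e • a = 0 := by
    intro a ha
    apply htor
    have h1 : b.repr (mk a) = 0 := by
      ext i
      have := congrFun ha i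
      simpa [hψ] using this
    apply b.repr.injective
    rw [h1]; simp
  have hψsingle : ∀ i : ι, ∃ a : A, ψ a = Pi.single i (1:ℚ) := by
    intro i
    obtain ⟨a, ha⟩ := hmksurj (b i)
    refine ⟨a, ?_⟩
    funext j
    simp only [hψ, AddMonoidHom.coe_mk, ZeroHom.coe_mk, ha, Module.Basis.repr_self]
    by_cases h : j = i
    · subst h; simp
    · simp [Finsupp.single_apply, Pi.single_apply, h, Ne.symm h]
  set ψR : A → (ι → ℝ) := fun a => Rc (ψ a) with hψR
  set S : Set (ι → ℝ) := ψR '' (N : Set A) with hS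
  set C := Submodule.span ℝ≥0 S with hC
  have hCconv : Convex ℝ (↑C : Set (ι → ℝ)) := by
    intro x hx y hy a bb ha hbb hab
    have h1 : (⟨a, ha⟩ : ℝ≥0) • x + (⟨bb, hbb⟩ : ℝ≥0) • y ∈ C :=
      C.add_mem (C.smul_mem _ hx) (C.smul_mem _ hy)
    simpa [NNReal.smul_def] using h1
  have hzero : (0 : ι → ℝ) ∈ (↑C : Set (ι → ℝ)) := C.zero_mem
  -- closure of the cone is everything
  have hclos : closure (↑C : Set (ι → ℝ)) = Set.univ := by
    rw [Set.eq_univ_iff_forall]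
    intro x
    by_contra hx
    obtain ⟨f, u, hfu, hux⟩ :=
      geometric_hahn_banach_closed_point (hCconv.closure) isClosed_closure hx
    have hu0 : 0 < u := by
      have := hfu 0 (subset_closure hzero)
      simpa using this
    have hfneg : ∀ v ∈ (↑C : Set (ι → ℝ)), f v ≤ 0 := by
      intro v hv
      by_contra hfv
      push_neg at hfv
      set r : ℝ≥0 := ⟨(u+1)/(f v), by positivity⟩ with hr
      have hrv : r • v ∈ (↑C : Set (ι → ℝ)) := C.smul_mem r hv
      have hfrv : f (r • v) = (u+1) := by
        rw [NNReal.smul_def, map_smul]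
        simp only [hr, smul_eq_mul, NNReal.coe_mk]
        exact div_mul_cancel₀ _ (ne_of_gt hfv)
      have := hfu _ (subset_closure hrv)
      rw [hfrv] at this
      linarith
    set χ : A →+ ℝ :=
      { toFun := fun a => -(f (ψR a))
        map_zero' := by simp [hψR, Rc_zero]
        map_add' := by
          intro a a'
          have h1 : ψR (a+a') = ψR a + ψR a' := by
            simp only [hψR]; rw [map_add, Rc_add]
          show -(f (ψR (a+a'))) = -(f (ψR a)) + -(f (ψR a'))
          rw [h1, map_add]
          ring } with hχ
    have hχpos : ∀ n ∈ N, 0 ≤ χ n := by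
      intro n hn
      have : ψR n ∈ S := ⟨n, hn, rfl⟩
      have h2 : ψR n ∈ (↑C : Set (ι → ℝ)) := Submodule.subset_span this
      have := hfneg _ h2
      simp only [hχ, AddMonoidHom.coe_mk, ZeroHom.coe_mk]
      linarith
    have hχ0 := hsep χ hχpos
    have hfψ : ∀ a : A, f (ψR a) = 0 := by
      intro a
      have := congrFun (congrArg (fun (m : A →+ ℝ) => (m : A → ℝ)) hχ0) a
      simp only [hχ, AddMonoidHom.coe_mk, ZeroHom.coe_mk] at this
      simpa using this
    have hfsingle : ∀ i : ι, f (Pi.single i (1:ℝ)) = 0 := by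
      intro i
      obtain ⟨a, ha⟩ := hψsingle i
      have h1 : ψR a = Pi.single i (1:ℝ) := by
        rw [hψR]
        funext j
        simp only [Rc, ha]
        by_cases h : j = i
        · subst h; simp
        · simp [Pi.single_apply, h]
      rw [← h1]
      exact hfψ a
    have hfzero : f x = 0 := by
      have hx2 : x = ∑ i : ι, x i • (Pi.single i (1:ℝ) : ι → ℝ) := by
        conv_lhs => rw [← Finset.univ_sum_single x]
        apply Finset.sum_congr rfl
        intro i _
        rw [← Pi.single_smul]
        simp
      rw [hx2, map_sum]
      apply Finset.sum_eq_zero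
      intro i _
      rw [map_smul, hfsingle i, smul_eq_mul, mul_zero]
    rw [hfzero] at hux
    linarith
  -- the cone is everything
  haveI : FiniteDimensional ℝ (ι → ℝ) := inferInstance
  have hspan : affineSpan ℝ (↑C : Set (ι → ℝ)) = ⊤ := by
    have h1 : IsClosed (↑(affineSpan ℝ (↑C : Set (ι → ℝ))) : Set (ι → ℝ)) :=
      (affineSpan ℝ (↑C : Set (ι → ℝ))).closed_of_finiteDimensional
    have h2 : closure (↑C : Set (ι → ℝ))
        ⊆ ↑(affineSpan ℝ (↑C : Set (ι → ℝ))) := by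
      rw [← h1.closure_eq]
      exact closure_mono (subset_affineSpan ℝ _)
    rw [hclos] at h2
    rw [eq_top_iff]
    intro x _
    exact h2 (Set.mem_univ x)
  obtain ⟨y₀, hy₀⟩ := (hCconv.interior_nonempty_iff_affineSpan_eq_top).mpr hspan
  have hCuniv : ∀ x : ι → ℝ, x ∈ (↑C : Set (ι → ℝ)) := by
    intro x
    have hw : (2:ℝ) • x - y₀ ∈ closure (↑C : Set (ι → ℝ)) := by
      rw [hclos]; trivial
    have hseg : x ∈ openSegment ℝ y₀ ((2:ℝ) • x - y₀) := by
      refine ⟨1/2, 1/2, by norm_num, by norm_num, by norm_num, by module⟩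
    have := hCconv.openSegment_interior_closure_subset_interior hy₀ hw hseg
    exact interior_subset this
  -- extract a finite nonnegative combination
  have hxC : ψR z ∈ Submodule.span ℝ≥0 S := by
    have h := hCuniv (ψR z)
    rwa [hC] at h
  obtain ⟨c, hcsupp, hcsum⟩ := Submodule.mem_span_set.mp hxC
  set J := ↥(c.support) with hJ
  have hchoice : ∀ j : J, ∃ n : A, n ∈ N ∧ ψR n = (j : ι → ℝ) := by
    intro j
    have := hcsupp j.2
    obtain ⟨n, hn, hval⟩ := this
    exact ⟨n, hn, hval⟩
  choose nn hnmem hnval using hchoice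
  have heqR : (∑ j : J, ((c ↑j : ℝ≥0) : ℝ) • Rc (ψ (nn j))) = Rc (ψ z) := by
    have h1 : ∀ j : J, Rc (ψ (nn j)) = (j : ι → ℝ) := fun j => hnval j
    calc (∑ j : J, ((c ↑j : ℝ≥0) : ℝ) • Rc (ψ (nn j)))
        = ∑ j : J, (c ↑j) • (j : ι → ℝ) := by
          apply Finset.sum_congr rfl
          intro j _
          rw [h1 j, NNReal.smul_def]
      _ = ∑ a ∈ c.support, (c a) • a := by
          rw [← Finset.sum_coe_sort c.support (fun a => (c a) • a)]
      _ = ψR z := by rw [← hcsum, Finsupp.sum]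
      _ = Rc (ψ z) := rfl
  obtain ⟨mu, hmupos, hmueq⟩ := rat_sol (fun j : J => ψ (nn j)) (ψ z)
    (fun j => ((c ↑j : ℝ≥0) : ℝ)) (fun j => (c ↑j).2) heqR
  -- clear denominators
  set D : ℕ := ∏ j : J, (mu j).den with hD
  have hD0 : 0 < D := Finset.prod_pos (fun j _ => (mu j).pos)
  have hm : ∀ j : J, ∃ m : ℕ, (m : ℚ) = (D : ℚ) * mu j := by
    intro j
    set Dj : ℕ := ∏ k ∈ Finset.univ.erase j, (mu k).den with hDj
    have hfac : D = (mu j).den * Dj := by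
      rw [hD, hDj, ← Finset.mul_prod_erase Finset.univ _ (Finset.mem_univ j)]
    refine ⟨(mu j).num.toNat * Dj, ?_⟩
    have hnum0 : 0 ≤ (mu j).num := Rat.num_nonneg.mpr (hmupos j)
    have hnumcast : (((mu j).num.toNat : ℤ) : ℚ) = ((mu j).num : ℚ) := by
      rw [Int.toNat_of_nonneg hnum0]
    have hden : (((mu j).den : ℚ)) ≠ 0 := Nat.cast_ne_zero.mpr (mu j).den_nz
    have hmu : ((mu j).num : ℚ) = mu j * ((mu j).den : ℚ) := by
      calc ((mu j).num : ℚ) = ((mu j).num : ℚ) / ((mu j).den : ℚ) * ((mu j).den : ℚ) := by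
            field_simp
        _ = mu j * ((mu j).den : ℚ) := by rw [Rat.num_div_den]
    push_cast
    rw [show (((mu j).num.toNat : ℚ)) = ((mu j).num : ℚ) by exact_mod_cast hnumcast]
    rw [hmu, hfac]
    push_cast
    ring
  choose m hmeq using hm
  set a₀ : A := ∑ j : J, (m j) • nn j with ha₀
  have ha₀N : a₀ ∈ N := AddSubmonoid.sum_mem N (fun j _ => AddSubmonoid.nsmul_mem N (hnmem j) (m j))
  have hψeq : ψ (D • z - a₀) = 0 := by
    rw [map_sub]
    have h1 : ψ (D • z) = (D : ℚ) • ψ z := by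
      rw [map_nsmul, Nat.cast_smul_eq_nsmul]
    have h2 : ψ a₀ = ∑ j : J, (m j : ℚ) • ψ (nn j) := by
      rw [ha₀, map_sum]
      apply Finset.sum_congr rfl
      intro j _
      rw [map_nsmul, Nat.cast_smul_eq_nsmul]
    rw [h1, h2, ← hmueq, Finset.smul_sum, sub_eq_zero]
    apply Finset.sum_congr rfl
    intro j _
    rw [hmeq j, smul_smul]
  obtain ⟨e, he0, hee⟩ := hψtor _ hψeq
  refine ⟨e * D, Nat.mul_pos he0 hD0, ?_⟩
  have : (e * D) • z = e • a₀ := by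
    have h1 : e • (D • z - a₀) = 0 := hee
    rw [smul_sub, sub_eq_zero] at h1
    rw [mul_smul]
    exact h1
  rw [this]
  exact AddSubmonoid.nsmul_mem N ha₀N e

end ConeMain

section Family
variable {G : Type u} [Group G]

lemma family_prod (m p m' p' : G)
    (hz : ∀ x : G, (m*p) * x = x * (m*p)) (hz' : ∀ x : G, (m'*p') * x = x * (m'*p'))
    (ht : ∀ x : G, ⁅m,m'⁆ * x = x * ⁅m,m'⁆) (k : ℕ) :
    p^k * p'^k * m^k * m'^k = ⁅m,m'⁆^(k*k) * ((m*p) * (m'*p'))^k := by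
  set z := m * p with hzdef
  set z' := m' * p' with hz'def
  have hppow : p^k = (m⁻¹)^k * z^k := by
    have h0 : p = m⁻¹ * z := by rw [hzdef]; group
    rw [h0]
    exact Commute.mul_pow (show Commute m⁻¹ z from (hz m⁻¹).symm) k
  have hppow' : p'^k = (m'⁻¹)^k * z'^k := by
    have h0 : p' = m'⁻¹ * z' := by rw [hz'def]; group
    rw [h0]
    exact Commute.mul_pow (show Commute m'⁻¹ z' from (hz' m'⁻¹).symm) k
  have hzz' : (z * z')^k = z^k * z'^k :=
    Commute.mul_pow (show Commute z z' from hz z') k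
  have hck := central_pow hz k
  have hck' := central_pow hz' k
  -- key commutator identity
  have hcpow : ⁅m^k, m'^k⁆ = ⁅m,m'⁆^(k*k) := comm_pow_pow ht k
  have htk : ∀ x : G, ⁅m^k, m'^k⁆ * x = x * ⁅m^k, m'^k⁆ := by
    intro x; rw [hcpow]; exact central_pow ht (k*k) x
  have hkey : (m^k)⁻¹ * (m'^k)⁻¹ * m^k * m'^k = ⁅m,m'⁆^(k*k) := by
    have h1 : ⁅(m^k)⁻¹, (m'^k)⁻¹⁆ = ⁅m^k, m'^k⁆ := comm_inv_inv_central htk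
    have h2 : ⁅(m^k)⁻¹, (m'^k)⁻¹⁆ = (m^k)⁻¹ * (m'^k)⁻¹ * m^k * m'^k := by
      rw [commutatorElement_def']; group
    rw [← hcpow, ← h1, h2]
  rw [hppow, hppow', inv_pow, inv_pow, hzz']
  -- now bubble the central powers z^k, z'^k to the right
  have e1 : (m^k)⁻¹ * z^k * ((m'^k)⁻¹ * z'^k) * m^k * m'^k
      = (m^k)⁻¹ * (m'^k)⁻¹ * m^k * m'^k * (z^k * z'^k) := by
    calc (m^k)⁻¹ * z^k * ((m'^k)⁻¹ * z'^k) * m^k * m'^k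
        = (m^k)⁻¹ * (z^k * ((m'^k)⁻¹ * (z'^k * (m^k * m'^k)))) := by group
      _ = (m^k)⁻¹ * (((m'^k)⁻¹ * (z'^k * (m^k * m'^k))) * z^k) := by
          rw [hck ((m'^k)⁻¹ * (z'^k * (m^k * m'^k)))]
      _ = (m^k)⁻¹ * ((m'^k)⁻¹ * (z'^k * (m^k * m'^k * z^k))) := by group
      _ = (m^k)⁻¹ * ((m'^k)⁻¹ * ((m^k * m'^k * z^k) * z'^k)) := by
          rw [hck' (m^k * m'^k * z^k)]
      _ = (m^k)⁻¹ * (m'^k)⁻¹ * m^k * m'^k * (z^k * z'^k) := by group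
  rw [e1, hkey]

lemma family_prod' (m p m' p' : G)
    (hz : ∀ x : G, (m*p) * x = x * (m*p)) (hz' : ∀ x : G, (m'*p') * x = x * (m'*p'))
    (ht : ∀ x : G, ⁅m,m'⁆ * x = x * ⁅m,m'⁆) (k : ℕ) :
    p'^k * p^k * m'^k * m^k = (⁅m,m'⁆⁻¹)^(k*k) * ((m*p) * (m'*p'))^k := by
  have ht' : ∀ x : G, ⁅m',m⁆ * x = x * ⁅m',m⁆ := by
    intro x
    rw [← commutatorElement_inv]
    exact central_inv ht x
  have h := family_prod m' p' m p hz' hz ht' k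
  rw [h, ← commutatorElement_inv]
  congr 1
  rw [hz' (m*p)]

end Family

section MainProof
open scoped Pointwise

lemma real_squeeze {a b : ℝ} (h : ∀ k : ℕ, 0 ≤ (k:ℝ) * (k:ℝ) * a + (k:ℝ) * b) :
    0 ≤ a := by
  by_contra ha
  push_neg at ha
  obtain ⟨k₀, hk₀⟩ := exists_nat_gt (max (b / (-a)) 0)
  have hk0pos : (0:ℝ) < (k₀:ℝ) := lt_of_le_of_lt (le_max_right _ _) hk₀
  have h1 : b / (-a) < (k₀:ℝ) := lt_of_le_of_lt (le_max_left _ _) hk₀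
  have h2 : b < (k₀:ℝ) * (-a) := by
    rwa [div_lt_iff₀ (by linarith : (0:ℝ) < -a)] at h1
  have := h k₀
  nlinarith

theorem main_aux (n : ℕ) : ∀ (G : Type u) [Group G] [Group.FG G] (M : Submonoid G),
    (⊤ : Subgroup G).lowerCentralSeries n = ⊥ →
    (M : Set G) * ((commutator G : Subgroup G) : Set G) = Set.univ →
    M = ⊤ := by
  induction n with
  | zero =>
      intro G _ _ M hbot _
      have htriv : ∀ g : G, g = 1 := by
        intro g
        have h1 : g ∈ (⊤ : Subgroup G).lowerCentralSeries 0 := by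
          rw [lowerCentralSeries_zero]; trivial
        rw [hbot] at h1
        simpa using h1
      refine (Submonoid.eq_top_iff' M).mpr (fun x => ?_)
      rw [htriv x]; exact M.one_mem
  | succ n ih =>
      intro G _ _ M hbot h
      rcases Nat.eq_zero_or_pos n with hn0 | hn1
      · -- abelian case
        subst hn0
        have hcomm : commutator G = ⊥ := by
          rw [← Subgroup.top_lowerCentralSeries_one]; exact hbot
        rw [hcomm] at h
        refine (Submonoid.eq_top_iff' M).mpr (fun x => ?_)
        have hx : x ∈ (M : Set G) * ((⊥ : Subgroup G) : Set G) := by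
          rw [h]; trivial
        obtain ⟨a, ha, b, hb, hab⟩ := hx
        have hb1 : b = 1 := by simpa [Subgroup.coe_bot] using hb
        rw [← hab, hb1]
        simpa using ha
      -- main case : n ≥ 1
      set Z := (⊤ : Subgroup G).lowerCentralSeries n with hZdef
      have hcenZ : ∀ z ∈ Z, ∀ x : G, z * x = x * z := lcs_central hbot
      haveI : Z.Normal := Subgroup.lowerCentralSeries_normal ⊤ n
      set π : G →* G ⧸ Z := QuotientGroup.mk' Z with hπ
      have hπsurj : Function.Surjective π := QuotientGroup.mk'_surjective Z
      haveI : Group.FG (G ⧸ Z) := Group.fg_of_surjective hπsurj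
      have hlcsQ : (⊤ : Subgroup (G ⧸ Z)).lowerCentralSeries n = ⊥ := by
        rw [← lcs_map_surj π hπsurj n, ← hZdef, Subgroup.map_eq_bot_iff,
          hπ, QuotientGroup.ker_mk']
      have hcommQ : commutator (G ⧸ Z) = Subgroup.map π (commutator G) := by
        rw [commutator_def, commutator_def, Subgroup.map_commutator,
          Subgroup.map_top_of_surjective π hπsurj]
      have hhQ : ((Submonoid.map π M : Submonoid (G ⧸ Z)) : Set (G ⧸ Z))
          * ((commutator (G ⧸ Z) : Subgroup (G ⧸ Z)) : Set (G ⧸ Z)) = Set.univ := by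
        have h2 : (π : G →* G ⧸ Z) ''
            ((M : Set G) * ((commutator G : Subgroup G) : Set G)) = Set.univ := by
          rw [h, Set.image_univ]
          exact Set.range_eq_univ.mpr hπsurj
        rw [Set.image_mul] at h2
        rw [hcommQ, Submonoid.coe_map, Subgroup.coe_map]
        exact h2
      have hMQ : Submonoid.map π M = ⊤ := ih (G ⧸ Z) (Submonoid.map π M) hlcsQ hhQ
      have HMZ : ∀ g : G, ∃ m, m ∈ M ∧ m⁻¹ * g ∈ Z := by
        intro g
        have h1 : π g ∈ Submonoid.map π M := by rw [hMQ]; trivial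
        obtain ⟨m, hm, hmg⟩ := h1
        refine ⟨m, hm, ?_⟩
        have h2 : π (m⁻¹ * g) = 1 := by
          rw [map_mul, map_inv, hmg]; group
        have h3 : m⁻¹ * g ∈ π.ker := h2
        rwa [hπ, QuotientGroup.ker_mk'] at h3
      have hstar : ∀ m, m ∈ M → ∃ p, p ∈ M ∧ m * p ∈ M ∧ m * p ∈ Z := by
        intro m hm
        obtain ⟨p, hp, hpz⟩ := HMZ m⁻¹
        refine ⟨p, hp, M.mul_mem hm hp, ?_⟩
        rw [← Subgroup.inv_mem_iff Z, mul_inv_rev]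
        exact hpz
      have hdecomp : ∀ g g' : G, ⁅g, g'⁆ ∈ Z →
          ∃ m m' p p', m ∈ M ∧ m' ∈ M ∧ p ∈ M ∧ p' ∈ M ∧
            ⁅g, g'⁆ = ⁅m, m'⁆ ∧ (m*p) ∈ M ∧ (m*p) ∈ Z ∧ (m'*p') ∈ M ∧ (m'*p') ∈ Z := by
        intro g g' hgg'
        obtain ⟨m, hm, hw⟩ := HMZ g
        obtain ⟨m', hm', hw'⟩ := HMZ g'
        obtain ⟨p, hp, hmpM, hmpZ⟩ := hstar m hm
        obtain ⟨p', hp', hmpM', hmpZ'⟩ := hstar m' hm'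
        refine ⟨m, m', p, p', hm, hm', hp, hp', ?_, hmpM, hmpZ, hmpM', hmpZ'⟩
        have hg : g = m * (m⁻¹ * g) := by group
        have hg' : g' = m' * (m'⁻¹ * g') := by group
        calc ⁅g, g'⁆ = ⁅m * (m⁻¹ * g), m' * (m'⁻¹ * g')⁆ := by rw [← hg, ← hg']
          _ = ⁅m, m' * (m'⁻¹ * g')⁆ := comm_central_left (hcenZ _ hw) _ _
          _ = ⁅m, m'⁆ := comm_central_right (hcenZ _ hw') _ _
      -- families
      have hfam : ∀ g g' : G, ∀ _ : ⁅g, g'⁆ ∈ Z,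
          ∃ u, ∃ _ : u ∈ Z, u ∈ M ∧
            ∀ k : ℕ, (⁅g,g'⁆^(k*k) * u^k ∈ M ∧ (⁅g,g'⁆⁻¹)^(k*k) * u^k ∈ M) := by
        intro g g' hgg'
        obtain ⟨m, m', p, p', hm, hm', hp, hp', heq, hmpM, hmpZ, hmpM', hmpZ'⟩ :=
          hdecomp g g' hgg'
        refine ⟨(m*p) * (m'*p'), Z.mul_mem hmpZ hmpZ', M.mul_mem hmpM hmpM', ?_⟩
        intro k
        have hz := hcenZ _ hmpZ
        have hz' := hcenZ _ hmpZ'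
        have ht : ∀ x : G, ⁅m,m'⁆ * x = x * ⁅m,m'⁆ := by
          rw [← heq]; exact hcenZ _ hgg'
        constructor
        · have h1 := family_prod m p m' p' hz hz' ht k
          rw [heq, ← h1]
          exact M.mul_mem (M.mul_mem (M.mul_mem (M.pow_mem hp k) (M.pow_mem hp' k))
            (M.pow_mem hm k)) (M.pow_mem hm' k)
        · have h1 := family_prod' m p m' p' hz hz' ht k
          rw [heq, ← h1]
          exact M.mul_mem (M.mul_mem (M.mul_mem (M.pow_mem hp' k) (M.pow_mem hp k))
            (M.pow_mem hm' k)) (M.pow_mem hm k)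
      -- Z as closure of commutators
      have hn' : n - 1 + 1 = n := Nat.succ_pred_eq_of_pos hn1
      have hZcomm : Z = ⁅(⊤ : Subgroup G).lowerCentralSeries (n-1), (⊤ : Subgroup G)⁆ := by
        have h5 := lcs_succ_eq (G := G) (n-1)
        rw [hn'] at h5
        rw [hZdef]
        exact h5
      set CommSet : Set G :=
        {x : G | ∃ g₁ ∈ (⊤ : Subgroup G).lowerCentralSeries (n-1), ∃ g₂ ∈ (⊤ : Subgroup G), ⁅g₁, g₂⁆ = x}
        with hCommSet
      have hZclos : Z = Subgroup.closure CommSet := by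
        rw [hZcomm, Subgroup.commutator_def]
      have hCommZ : ∀ g₁ g₂ : G, g₁ ∈ (⊤ : Subgroup G).lowerCentralSeries (n-1) → ⁅g₁, g₂⁆ ∈ Z := by
        intro g₁ g₂ h₁
        rw [hZcomm]
        exact Subgroup.commutator_mem_commutator h₁ (Subgroup.mem_top g₂)
      -- abelian structure on Z
      letI : CommGroup ↥Z :=
        { (inferInstance : Group ↥Z) with
          mul_comm := fun a b => Subtype.ext (hcenZ _ a.2 _) }
      have hZfg : AddGroup.FG (Additive ↥Z) := by
        obtain ⟨F, hFfin, hFgen⟩ := lcs_fg G hbot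
        have h1 : Z.FG := (Subgroup.fg_iff Z).mpr ⟨F, hFgen.symm, hFfin⟩
        have h2 : Group.FG ↥Z := (Group.fg_iff_subgroup_fg Z).mpr h1
        exact GroupFG.iff_add_fg.mp h2
      set N : AddSubmonoid (Additive ↥Z) :=
        { carrier := {a : Additive ↥Z | ((Additive.toMul a : ↥Z) : G) ∈ M}
          zero_mem' := M.one_mem
          add_mem' := fun ha hb => M.mul_mem ha hb } with hN
      have hsep : ∀ χ : Additive ↥Z →+ ℝ, (∀ a ∈ N, 0 ≤ χ a) → χ = 0 := by
        intro χ hχ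
        have hvanish : ∀ g g' : G, ∀ hgg' : ⁅g, g'⁆ ∈ Z,
            χ (Additive.ofMul (⟨⁅g,g'⁆, hgg'⟩ : ↥Z)) = 0 := by
          intro g g' hgg'
          obtain ⟨u, huZ, huM, hk⟩ := hfam g g' hgg'
          set ta : Additive ↥Z := Additive.ofMul (⟨⁅g,g'⁆, hgg'⟩ : ↥Z) with hta
          set ua : Additive ↥Z := Additive.ofMul (⟨u, huZ⟩ : ↥Z) with hua
          have hplus : ∀ k : ℕ, 0 ≤ (k:ℝ) * (k:ℝ) * χ ta + (k:ℝ) * χ ua := by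
            intro k
            have hEk : ⁅g,g'⁆^(k*k) * u^k ∈ M := (hk k).1
            have hmem : ((k*k) • ta + k • ua) ∈ N := by
              show ((Additive.toMul ((k*k) • ta + k • ua) : ↥Z) : G) ∈ M
              have hh : (Additive.toMul ((k*k) • ta + k • ua) : ↥Z)
                  = (⟨⁅g,g'⁆, hgg'⟩ : ↥Z)^(k*k) * (⟨u, huZ⟩ : ↥Z)^k := rfl
              rw [hh]
              exact hEk
            have h0 := hχ _ hmem
            rw [map_add, map_nsmul, map_nsmul, nsmul_eq_mul, nsmul_eq_mul] at h0
            push_cast at h0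
            nlinarith [h0]
          have hminus : ∀ k : ℕ, 0 ≤ (k:ℝ) * (k:ℝ) * (-(χ ta)) + (k:ℝ) * χ ua := by
            intro k
            have hEk : (⁅g,g'⁆⁻¹)^(k*k) * u^k ∈ M := (hk k).2
            have hmem : ((k*k) • (-ta) + k • ua) ∈ N := by
              show ((Additive.toMul ((k*k) • (-ta) + k • ua) : ↥Z) : G) ∈ M
              have hh : (Additive.toMul ((k*k) • (-ta) + k • ua) : ↥Z)
                  = ((⟨⁅g,g'⁆, hgg'⟩ : ↥Z)⁻¹)^(k*k) * (⟨u, huZ⟩ : ↥Z)^k := rfl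
              rw [hh]
              exact hEk
            have h0 := hχ _ hmem
            rw [map_add, map_nsmul, map_nsmul, map_neg, nsmul_eq_mul, nsmul_eq_mul] at h0
            push_cast at h0
            nlinarith [h0]
          have h1 : 0 ≤ χ ta := real_squeeze hplus
          have h2 : 0 ≤ -(χ ta) := real_squeeze hminus
          linarith
        set Kmul : Subgroup ↥Z :=
          { carrier := {x : ↥Z | χ (Additive.ofMul x) = 0}
            one_mem' := by
              show χ (Additive.ofMul (1 : ↥Z)) = 0
              exact map_zero χ
            mul_mem' := by
              intro a b ha hb
              show χ (Additive.ofMul (a * b)) = 0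
              have hh : Additive.ofMul (a * b)
                  = Additive.ofMul a + Additive.ofMul b := rfl
              rw [hh, map_add]
              simp only [Set.mem_setOf_eq] at ha hb
              rw [ha, hb, add_zero]
            inv_mem' := by
              intro a ha
              show χ (Additive.ofMul a⁻¹) = 0
              have hh : Additive.ofMul a⁻¹ = -(Additive.ofMul a) := rfl
              simp only [Set.mem_setOf_eq] at ha
              rw [hh, map_neg, ha, neg_zero] } with hKmul
        have hZle : Z ≤ Subgroup.map Z.subtype Kmul := by
          conv_lhs => rw [hZclos]
          rw [Subgroup.closure_le]
          rintro x ⟨g₁, h₁, g₂, _, rfl⟩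
          have hxZ : ⁅g₁,g₂⁆ ∈ Z := hCommZ g₁ g₂ h₁
          exact ⟨⟨⁅g₁,g₂⁆, hxZ⟩, hvanish g₁ g₂ hxZ, rfl⟩
        apply AddMonoidHom.ext
        intro a
        obtain ⟨x, hxK, hxe⟩ := hZle (Additive.toMul a : ↥Z).2
        have hxx : x = (Additive.toMul a : ↥Z) := Subtype.ext hxe
        rw [hxx] at hxK
        exact hxK
      -- the cone lemma
      have hcone := cone_main hZfg N hsep
      have hU : ∀ z : G, ∀ _ : z ∈ Z, ∃ q : ℕ, 0 < q ∧ z^q ∈ M ∧ (z^q)⁻¹ ∈ M := by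
        intro z hz
        obtain ⟨q1, hq1, hq1m⟩ := hcone (Additive.ofMul (⟨z, hz⟩ : ↥Z))
        obtain ⟨q2, hq2, hq2m⟩ := hcone (Additive.ofMul ((⟨z, hz⟩ : ↥Z)⁻¹))
        have hq1m' : z^q1 ∈ M := by
          have hh : (Additive.toMul (q1 • Additive.ofMul (⟨z, hz⟩ : ↥Z)) : ↥Z)
              = (⟨z, hz⟩ : ↥Z)^q1 := rfl
          have := hq1m
          rw [hN] at this
          simp only [AddSubmonoid.mem_mk, AddSubsemigroup.mem_mk, Set.mem_setOf_eq] at this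
          rw [hh] at this
          simpa using this
        have hq2m' : (z⁻¹)^q2 ∈ M := by
          have hh : (Additive.toMul (q2 • Additive.ofMul ((⟨z, hz⟩ : ↥Z)⁻¹)) : ↥Z)
              = ((⟨z, hz⟩ : ↥Z)⁻¹)^q2 := rfl
          have := hq2m
          rw [hN] at this
          simp only [AddSubmonoid.mem_mk, AddSubsemigroup.mem_mk, Set.mem_setOf_eq] at this
          rw [hh] at this
          simpa using this
        refine ⟨q1 * q2, Nat.mul_pos hq1 hq2, ?_, ?_⟩
        · rw [pow_mul]
          exact M.pow_mem hq1m' q2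
        · have hh : ((z^(q1*q2))⁻¹) = ((z⁻¹)^q2)^q1 := by
            rw [← inv_pow, ← pow_mul, Nat.mul_comm]
          rw [hh]
          exact M.pow_mem hq2m' q1
      -- the unit subgroup U
      set U : Subgroup G :=
        { carrier := {x : G | x ∈ Z ∧ x ∈ M ∧ x⁻¹ ∈ M}
          one_mem' := ⟨Z.one_mem, M.one_mem, by simpa using M.one_mem⟩
          mul_mem' := by
            rintro a b ⟨haZ, haM, haM'⟩ ⟨hbZ, hbM, hbM'⟩
            refine ⟨Z.mul_mem haZ hbZ, M.mul_mem haM hbM, ?_⟩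
            rw [mul_inv_rev]
            exact M.mul_mem hbM' haM'
          inv_mem' := by
            rintro a ⟨haZ, haM, haM'⟩
            exact ⟨Z.inv_mem haZ, haM', by simpa using haM⟩ } with hUdef
      haveI : U.Normal := central_normal U (fun z hz x => hcenZ z hz.1 x)
      set π₂ : G →* G ⧸ U := QuotientGroup.mk' U with hπ₂
      have hπ₂surj : Function.Surjective π₂ := QuotientGroup.mk'_surjective U
      have hUZpow : ∀ z ∈ Z, ∃ q : ℕ, 0 < q ∧ z^q ∈ U := by
        intro z hz
        obtain ⟨q, hq, hm, hm'⟩ := hU z hz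
        exact ⟨q, hq, Z.pow_mem hz q, hm, hm'⟩
      -- the subgroup W of the quotient
      set W : Subgroup (G ⧸ U) :=
        { carrier := {x | x ∈ Subgroup.map π₂ Z ∧ x ∈ Submonoid.map π₂ M}
          one_mem' := ⟨Subgroup.one_mem _, Submonoid.one_mem _⟩
          mul_mem' := by
            rintro a b ⟨h1, h2⟩ ⟨h1', h2'⟩
            exact ⟨Subgroup.mul_mem _ h1 h1', Submonoid.mul_mem _ h2 h2'⟩
          inv_mem' := by
            rintro x ⟨hxZ, hxM⟩
            refine ⟨Subgroup.inv_mem _ hxZ, ?_⟩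
            obtain ⟨z, hz, hze⟩ := hxZ
            obtain ⟨q, hq, hzq⟩ := hUZpow z hz
            have hxq : x^q = 1 := by
              rw [← hze, ← map_pow]
              exact (QuotientGroup.eq_one_iff _).mpr hzq
            have hxinv : x⁻¹ = x^(q-1) := by
              have h5 : x * x^(q-1) = 1 := by
                have h6 : q - 1 + 1 = q := by omega
                rw [← pow_succ', h6]
                exact hxq
              exact inv_eq_of_mul_eq_one_right h5
            rw [hxinv]
            exact Submonoid.pow_mem _ hxM (q-1) } with hWdef
      have hsubW : Subgroup.map π₂ Z ≤ W := by
        have hmapclos : Subgroup.map π₂ Z = Subgroup.closure (π₂ '' CommSet) := by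
          rw [hZclos, MonoidHom.map_closure]
        rw [hmapclos, Subgroup.closure_le]
        rintro _ ⟨x, hxC, rfl⟩
        obtain ⟨g₁, h₁, g₂, _, rfl⟩ := hxC
        have hxZ : ⁅g₁,g₂⁆ ∈ Z := hCommZ g₁ g₂ h₁
        obtain ⟨u, huZ, huM, hk⟩ := hfam g₁ g₂ hxZ
        have hE1 : ⁅g₁,g₂⁆ * u ∈ M := by
          have := (hk 1).1
          simpa using this
        have hE1Z : ⁅g₁,g₂⁆ * u ∈ Z := Z.mul_mem hxZ huZ
        have heq2 : π₂ ⁅g₁,g₂⁆ = π₂ (⁅g₁,g₂⁆ * u) * (π₂ u)⁻¹ := by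
          rw [map_mul]; group
        rw [heq2]
        refine W.mul_mem ⟨Subgroup.mem_map_of_mem π₂ hE1Z, ?_⟩
          (W.inv_mem ⟨Subgroup.mem_map_of_mem π₂ huZ, ?_⟩)
        · exact ⟨_, hE1, rfl⟩
        · exact ⟨_, huM, rfl⟩
      have hfull : ∀ g : G, π₂ g ∈ Submonoid.map π₂ M := by
        intro g
        obtain ⟨m, hm, hw⟩ := HMZ g
        have h1 : π₂ g = π₂ m * π₂ (m⁻¹ * g) := by
          rw [← map_mul]
          congr 1
          group
        rw [h1]
        refine Submonoid.mul_mem _ ⟨m, hm, rfl⟩ ?_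
        exact (hsubW (Subgroup.mem_map_of_mem π₂ hw)).2
      refine (Submonoid.eq_top_iff' M).mpr (fun g => ?_)
      obtain ⟨m, hm, hme⟩ := hfull g
      have hinU : m⁻¹ * g ∈ U := by
        have h2 : π₂ (m⁻¹ * g) = 1 := by
          rw [map_mul, map_inv, hme]; group
        have h3 : m⁻¹*g ∈ π₂.ker := h2
        rwa [hπ₂, QuotientGroup.ker_mk'] at h3
      have hg : g = m * (m⁻¹ * g) := by group
      rw [hg]
      exact M.mul_mem hm hinU.2.1

end MainProof

theorem stmt_12 {G : Type*} [Group G] [Group.FG G] [Group.IsNilpotent G]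
    (M : Submonoid G)
    (h : (M : Set G) * ((commutator G : Subgroup G) : Set G) = Set.univ) :
    M = ⊤ := by
  obtain ⟨n, hn⟩ := nilpotent_iff_lowerCentralSeries.mp ‹Group.IsNilpotent G›
  exact main_aux n G M hn h
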